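/- Let A ∈ ℂ^{n×n}, H ∈ ℂ^{N×N}, W ∈ ℂ^{n×N}, u_0 ∈ ℂ^n, and let g : ℝ → ℂ^n be continuous. Let u : [0,t] → ℂ^n be differentiable with u'(s) = A u(s) + g(s) for all s ∈ [0,t] and u(0) = u_0. Let A_N be the (n+N)×(n+N) block upper-triangular matrix with blocks [[A, W],[0, H]], and define u_N(t) := [I_n 0] exp(t A_N) (u_0; e_1) (the first n entries of exp(t A_N) applied to the vector stacking u_0 and e_1 ∈ ℂ^N). Then ‖u(t) − u_N(t)‖ ≤ ∫_0^t ‖exp((t−s)A)‖ · ‖g(s) − W exp(sH) e_1‖ ds. -/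

import Mathlib

open scoped Matrix.Norms.L2Operator

/-- The first standard basis vector of `ℂ^N`. -/
noncomputable def e1C (N : ℕ) : Fin N → ℂ := fun j => if (j : ℕ) = 0 then 1 else 0

/-- The Euclidean norm of a vector in `ℂ^n`. -/
noncomputable def cnorm {n : ℕ} (v : Fin n → ℂ) : ℝ :=
  ‖(WithLp.equiv 2 (Fin n → ℂ)).symm v‖

open NormedSpace

noncomputable def mvL (l m : Type*) [Fintype l] [Fintype m] [DecidableEq m] :
    Matrix l m ℂ →L[ℝ] ((m → ℂ) →L[ℝ] (l → ℂ)) :=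
  LinearMap.toContinuousLinearMap
  { toFun := fun M => LinearMap.toContinuousLinearMap ((Matrix.mulVecLin M).restrictScalars ℝ)
    map_add' := by intro M N; ext v i; simp [Matrix.add_mulVec]
    map_smul' := by intro r M; ext v i; simp [Matrix.smul_mulVec] }

@[simp] lemma mvL_apply {l m : Type*} [Fintype l] [Fintype m] [DecidableEq m]
    (M : Matrix l m ℂ) (v : m → ℂ) : mvL l m M v = M.mulVec v := rfl

variable {m : Type*} [Fintype m] [DecidableEq m]

lemma hasDerivAt_exp_smul (M : Matrix m m ℂ) (s : ℝ) :
    HasDerivAt (fun r : ℝ => exp (r • M)) (M * exp (s • M)) s := by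
  exact hasDerivAt_exp_smul_const' M s

lemma commute_exp (M : Matrix m m ℂ) (s : ℝ) : M * exp (s • M) = exp (s • M) * M :=
  (((Commute.refl M).smul_right s).exp_right).eq

lemma exp_neg_cancel (M : Matrix m m ℂ) (s : ℝ) (v : m → ℂ) :
    (exp (s • M)).mulVec ((exp ((-s) • M)).mulVec v) = v := by
  rw [Matrix.mulVec_mulVec, ← exp_add_of_commute_of_mem_ball (𝕂 := ℂ) (((Commute.refl M).smul_left s).smul_right (-s))
    ((expSeries_radius_eq_top ℂ (Matrix m m ℂ)).symm ▸ edist_lt_top _ _) ((expSeries_radius_eq_top ℂ (Matrix m m ℂ)).symm ▸ edist_lt_top _ _)]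
  simp

/-- Uniqueness/representation of solutions of the linear ODE `z' = M z`. -/
lemma ode_solution (M : Matrix m m ℂ) (c : m → ℂ) (z : ℝ → m → ℂ)
    (hz : ∀ s, HasDerivAt z (M.mulVec (z s)) s) (h0 : z 0 = c) (s : ℝ) :
    z s = (exp (s • M)).mulVec c := by
  set w : ℝ → m → ℂ := fun s => (exp ((-s) • M)).mulVec (z s) with hw
  have key : ∀ s, HasDerivAt w 0 s := by
    intro s
    have h2 : HasDerivAt (fun r : ℝ => exp (r • M)) (M * exp ((-s) • M)) (-s) :=
      hasDerivAt_exp_smul M (-s)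
    have h3 : HasDerivAt (fun s : ℝ => -s) (-1 : ℝ) s := (hasDerivAt_id s).neg
    have h1 : HasDerivAt (fun s : ℝ => exp ((-s) • M)) (-(M * exp ((-s) • M))) s := by
      simpa [Function.comp_def] using h2.scomp s h3
    have h4 := ((mvL m m).hasFDerivAt.comp_hasDerivAt s h1).clm_apply (hz s)
    have heq : mvL m m (-(M * exp ((-s) • M))) (z s)
        + mvL m m (exp ((-s) • M)) (M.mulVec (z s)) = 0 := by
      simp only [mvL_apply, map_neg, ContinuousLinearMap.neg_apply, Matrix.neg_mulVec,
        ← Matrix.mulVec_mulVec, commute_exp]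
      exact neg_add_cancel _
    simp only [Function.comp_def] at h4
    rw [heq] at h4
    exact h4
  have hconst : ∀ r, w r = w 0 :=
    fun r => is_const_of_deriv_eq_zero (fun x => (key x).differentiableAt)
      (fun x => (key x).deriv) r 0
  have hw0 : w 0 = c := by simp [hw, h0]
  have h6 : (exp ((-s) • M)).mulVec (z s) = c := hw0 ▸ hconst s
  rw [← exp_neg_cancel M s (z s), h6]

lemma cnorm_nonneg {n : ℕ} (v : Fin n → ℂ) : 0 ≤ cnorm v := norm_nonneg _

lemma hasDerivAt_exp_mulVec (M : Matrix m m ℂ) (c : m → ℂ) (s : ℝ) :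
    HasDerivAt (fun s : ℝ => (exp (s • M)).mulVec c)
      (M.mulVec ((exp (s • M)).mulVec c)) s := by
  have h1 := hasDerivAt_exp_smul M s
  have h2 := ((mvL m m).flip c).hasFDerivAt.comp_hasDerivAt s h1
  have h3 : ((mvL m m).flip c) (M * exp (s • M)) = M.mulVec ((exp (s • M)).mulVec c) := by
    simp [ContinuousLinearMap.flip_apply, ← Matrix.mulVec_mulVec]
  rw [h3] at h2
  exact h2

/-- Variation-of-constants truncation error bound: if `u' = A u + g` on `[0, t]` with
`u(0) = u₀`, `A_N = [[A, W], [0, H]]` and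
`u_N(t) = [Iₙ 0] exp(t A_N) (u₀; e₁)`, then
`‖u(t) - u_N(t)‖ ≤ ∫₀ᵗ ‖exp((t-s)A)‖ ‖g(s) - W exp(sH) e₁‖ ds`. -/
theorem truncation_error_bound (n N : ℕ) (A : Matrix (Fin n) (Fin n) ℂ)
    (H : Matrix (Fin N) (Fin N) ℂ) (W : Matrix (Fin n) (Fin N) ℂ)
    (u0 : Fin n → ℂ) (g : ℝ → Fin n → ℂ) (hg : Continuous g)
    (t : ℝ) (ht : 0 ≤ t) (u : ℝ → Fin n → ℂ)
    (hu : ∀ s ∈ Set.Icc (0 : ℝ) t, HasDerivAt u (A.mulVec (u s) + g s) s)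
    (hu0 : u 0 = u0) :
    cnorm (u t - fun i =>
        (NormedSpace.exp (t • Matrix.fromBlocks A W 0 H)).mulVec
          (Sum.elim u0 (e1C N)) (Sum.inl i)) ≤
      ∫ s in (0 : ℝ)..t, ‖NormedSpace.exp ((t - s) • A)‖ *
        cnorm (g s - W.mulVec ((NormedSpace.exp (s • H)).mulVec (e1C N))) := by
  classical
  set M : Matrix (Fin n ⊕ Fin N) (Fin n ⊕ Fin N) ℂ := Matrix.fromBlocks A W 0 H with hM
  set c : (Fin n ⊕ Fin N) → ℂ := Sum.elim u0 (e1C N) with hc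
  set y : ℝ → (Fin n ⊕ Fin N) → ℂ := fun s => (exp (s • M)).mulVec c with hy
  have hyd : ∀ s, HasDerivAt y (M.mulVec (y s)) s := fun s => hasDerivAt_exp_mulVec M c s
  set ytop : ℝ → Fin n → ℂ := fun s i => y s (Sum.inl i) with hytopdef
  set ybot : ℝ → Fin N → ℂ := fun s j => y s (Sum.inr j) with hybotdef
  have hsplit : ∀ s, y s = Sum.elim (ytop s) (ybot s) := by
    intro s; funext x; cases x <;> rfl
  have hMy : ∀ s, M.mulVec (y s)
      = Sum.elim (A.mulVec (ytop s) + W.mulVec (ybot s)) (H.mulVec (ybot s)) := by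
    intro s
    rw [hsplit s, hM, Matrix.fromBlocks_mulVec]
    simp
  set Ltop : ((Fin n ⊕ Fin N) → ℂ) →L[ℝ] (Fin n → ℂ) :=
    LinearMap.toContinuousLinearMap ((LinearMap.funLeft ℂ ℂ Sum.inl).restrictScalars ℝ) with hLt
  set Lbot : ((Fin n ⊕ Fin N) → ℂ) →L[ℝ] (Fin N → ℂ) :=
    LinearMap.toContinuousLinearMap ((LinearMap.funLeft ℂ ℂ Sum.inr).restrictScalars ℝ) with hLb
  have hybot : ∀ s, HasDerivAt ybot (H.mulVec (ybot s)) s := by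
    intro s
    have h1 := Lbot.hasFDerivAt.comp_hasDerivAt s (hyd s)
    have h2 : Lbot (M.mulVec (y s)) = H.mulVec (ybot s) := by
      rw [hMy s]; rfl
    rw [h2] at h1
    exact h1
  have hy0 : y 0 = c := by
    simp [hy, zero_smul, exp_zero, Matrix.one_mulVec]
  have hb0 : ybot 0 = e1C N := by
    funext j; simp [hybotdef, hy0, hc]
  have hbs : ∀ s, ybot s = (exp (s • H)).mulVec (e1C N) :=
    ode_solution H (e1C N) ybot hybot hb0
  have hytop : ∀ s, HasDerivAt ytop
      (A.mulVec (ytop s) + W.mulVec ((exp (s • H)).mulVec (e1C N))) s := by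
    intro s
    have h1 := Ltop.hasFDerivAt.comp_hasDerivAt s (hyd s)
    have h2 : Ltop (M.mulVec (y s))
        = A.mulVec (ytop s) + W.mulVec ((exp (s • H)).mulVec (e1C N)) := by
      rw [hMy s, ← hbs s]; rfl
    rw [h2] at h1
    exact h1
  set f : ℝ → Fin n → ℂ := fun s => g s - W.mulVec ((exp (s • H)).mulVec (e1C N)) with hf
  set e : ℝ → Fin n → ℂ := fun s => u s - ytop s with he
  have hed : ∀ s ∈ Set.Icc (0 : ℝ) t, HasDerivAt e (A.mulVec (e s) + f s) s := by
    intro s hs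
    have h1 := (hu s hs).sub (hytop s)
    refine h1.congr_deriv ?_
    simp only [he, hf, Matrix.mulVec_sub]
    abel
  have he0 : e 0 = 0 := by
    have : ytop 0 = u0 := by funext i; simp [hytopdef, hy0, hc]
    simp [he, hu0, this]
  set φ : ℝ → Fin n → ℂ := fun s => (exp ((t - s) • A)).mulVec (e s) with hφ
  set ψ : ℝ → Fin n → ℂ := fun s => (exp ((t - s) • A)).mulVec (f s) with hψ
  have hφd : ∀ s ∈ Set.Icc (0 : ℝ) t, HasDerivAt φ (ψ s) s := by
    intro s hs
    have h2 : HasDerivAt (fun r : ℝ => exp (r • A)) (A * exp ((t - s) • A)) (t - s) :=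
      hasDerivAt_exp_smul A (t - s)
    have h3 : HasDerivAt (fun s : ℝ => t - s) (-1 : ℝ) s := (hasDerivAt_id s).const_sub t
    have hE : HasDerivAt (fun s : ℝ => exp ((t - s) • A)) (-(A * exp ((t - s) • A))) s := by
      simpa [Function.comp_def] using h2.scomp s h3
    have h4 := ((mvL (Fin n) (Fin n)).hasFDerivAt.comp_hasDerivAt s hE).clm_apply (hed s hs)
    have heq : mvL (Fin n) (Fin n) (-(A * exp ((t - s) • A))) (e s)
        + mvL (Fin n) (Fin n) (exp ((t - s) • A)) (A.mulVec (e s) + f s) = ψ s := by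
      simp only [mvL_apply, map_neg, ContinuousLinearMap.neg_apply, Matrix.neg_mulVec,
        Matrix.mulVec_add, ← Matrix.mulVec_mulVec, commute_exp, hψ]
      abel
    simp only [Function.comp_def] at h4
    rw [heq] at h4
    exact h4
  have hexpA : Continuous fun s : ℝ => exp ((t - s) • A) :=
    (continuous_iff_continuousAt.2 fun x => (exp_analytic (𝕂 := ℂ) x).continuousAt).comp (((continuous_const.sub continuous_id).smul continuous_const))
  have hexpH : Continuous fun s : ℝ => exp (s • H) :=
    (continuous_iff_continuousAt.2 fun x => (exp_analytic (𝕂 := ℂ) x).continuousAt).comp (continuous_id.smul continuous_const)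
  have hfc : Continuous f := by
    refine hg.sub ?_
    exact ((mvL (Fin n) (Fin N)) W).continuous.comp
      (((mvL (Fin N) (Fin N)).flip (e1C N)).continuous.comp hexpH)
  have hψc : Continuous ψ := by
    have : Continuous fun s : ℝ => mvL (Fin n) (Fin n) (exp ((t - s) • A)) (f s) :=
      ((mvL (Fin n) (Fin n)).continuous.comp hexpA).clm_apply hfc
    exact this
  have hψint : IntervalIntegrable ψ MeasureTheory.volume 0 t :=
    hψc.intervalIntegrable 0 t
  have hFTC : ∫ s in (0:ℝ)..t, ψ s = φ t - φ 0 := by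
    refine intervalIntegral.integral_eq_sub_of_hasDerivAt ?_ hψint
    intro x hx
    rw [Set.uIcc_of_le ht] at hx
    exact hφd x hx
  have hφt : φ t = e t := by simp [hφ]
  have hφ0 : φ 0 = 0 := by simp [hφ, he0]
  have het : e t = ∫ s in (0:ℝ)..t, ψ s := by
    rw [hFTC, hφt, hφ0, sub_zero]
  -- now the norm estimate
  set LE : (Fin n → ℂ) →L[ℝ] EuclideanSpace ℂ (Fin n) :=
    (((EuclideanSpace.equiv (Fin n) ℂ).symm :
      (Fin n → ℂ) ≃L[ℂ] EuclideanSpace ℂ (Fin n)).toContinuousLinearMap).restrictScalars ℝ with hLE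
  have hgoalLHS : cnorm (u t - fun i =>
      (exp (t • M)).mulVec c (Sum.inl i)) = ‖LE (e t)‖ := rfl
  rw [hgoalLHS, het, ← LE.intervalIntegral_comp_comm hψint]
  have hbnd : ∀ s, ‖LE (ψ s)‖ ≤ ‖exp ((t - s) • A)‖ * cnorm (f s) := by
    intro s
    exact Matrix.l2_opNorm_mulVec (exp ((t - s) • A)) (LE (f s))
  have hboundc : Continuous fun s => ‖exp ((t - s) • A)‖ * cnorm (f s) := by
    have h1 : Continuous fun s : ℝ => cnorm (f s) := (LE.continuous.comp hfc).norm
    exact hexpA.norm.mul h1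
  have := intervalIntegral.norm_integral_le_of_norm_le ht
    (g := fun s => ‖exp ((t - s) • A)‖ * cnorm (f s))
    (f := fun s => LE (ψ s)) (μ := MeasureTheory.volume) (a := 0) (b := t)
    (Filter.Eventually.of_forall fun s _ => hbnd s)
    (hboundc.intervalIntegrable 0 t)
  refine le_trans this (le_of_eq ?_)
  have hnn : (0:ℝ) ≤ ∫ s in (0:ℝ)..t, ‖exp ((t - s) • A)‖ * cnorm (f s) :=
    intervalIntegral.integral_nonneg ht
      (fun s _ => mul_nonneg (norm_nonneg _) (cnorm_nonneg _))
  rfl
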